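/- Fix a compact metric space (M, d_M), a sequence of Lipschitz functions (ϑ_n) dense in C(M) normalized by their Lipschitz norms, and define the metric D_M(λ, λ') = ∑_{n≥1} 2^{-n}|∫ϑ_n dλ − ∫ϑ_n dλ'| on probability measures on M; D_M metrizes weak convergence. Let (X,μ,T) be probability preserving, α a sequence of naturals, (A_l) rare events (μ(A_l) → 0), and Φ a random process with values in [0,∞). Assume: for each δ > 0 there exist rare events A_l^{(δ)} ⊂ A_l with μ_{A_l}(A_l ∖ A_l^{(δ)}) < δ and μ(A_l^{(δ)})·Φ_{A_l^{(δ)},α} ⇒ Φ under μ as l → ∞. Then μ(A_l)·Φ_{A_l,α} ⇒ Φ under μ as l → ∞. -/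

import Mathlib

open MeasureTheory Filter Topology
open scoped ENNReal

/-- Successive delayed return indices along the delay sequence with partial sums `abar`:
`delayedReturn T A abar 0 x = 0` and `delayedReturn T A abar (i+1) x` is the least `m ≥ 1`
with `m > delayedReturn T A abar i x` and `T^[abar m] x ∈ A` (`⊤` if none exists). -/
noncomputable def delayedReturn {X : Type*} (T : X → X) (A : Set X) (abar : ℕ → ℕ) :
    ℕ → X → ℕ∞
  | 0, _ => 0
  | i + 1, x => sInf {j : ℕ∞ | ∃ m : ℕ, j = (m : ℕ∞) ∧ 1 ≤ m ∧
      delayedReturn T A abar i x < (m : ℕ∞) ∧ T^[abar m] x ∈ A}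

/-- Canonical embedding `ℕ∞ → [0,∞]`. -/
noncomputable def toE : ℕ∞ → ℝ≥0∞ := fun m => WithTop.map (Nat.cast : ℕ → NNReal) m

/-- The delayed return process `μ(A)·Φ_{A,α}` (scaled by `c`), as a map into `[0,∞]^ℕ`. -/
noncomputable def delayedProc {X : Type*} (T : X → X) (A : Set X) (abar : ℕ → ℕ)
    (c : ℝ≥0∞) (x : X) : ℕ → ℝ≥0∞ :=
  fun i => c * toE (delayedReturn T A abar (i + 1) x)

/- ### Auxiliary lemmas -/

lemma enat_sInf_mem {S : Set ℕ∞} (hS : S.Nonempty) : sInf S ∈ S := by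
  have h := (IsWellFounded.wf (α := ℕ∞) (r := (· < ·))).min_mem S hS
  have : sInf S = (IsWellFounded.wf (α := ℕ∞) (r := (· < ·))).min S hS := by
    apply le_antisymm (sInf_le h)
    exact le_sInf fun b hb => not_lt.1 ((IsWellFounded.wf).not_lt_min S hb)
  rw [this]; exact h

section DelayedReturn

variable {X : Type*} {T : X → X} {A A' : Set X} {abar : ℕ → ℕ} {x : X}

lemma delayedReturn_le {i m : ℕ} (h1 : 1 ≤ m)
    (h2 : delayedReturn T A abar i x < (m : ℕ∞)) (h3 : T^[abar m] x ∈ A) :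
    delayedReturn T A abar (i + 1) x ≤ (m : ℕ∞) :=
  sInf_le ⟨m, rfl, h1, h2, h3⟩

lemma delayedReturn_spec {i : ℕ} {N : ℕ} (h : delayedReturn T A abar (i + 1) x ≤ (N : ℕ∞)) :
    ∃ m : ℕ, delayedReturn T A abar (i + 1) x = (m : ℕ∞) ∧ 1 ≤ m ∧
      delayedReturn T A abar i x < (m : ℕ∞) ∧ T^[abar m] x ∈ A := by
  have hne : {j : ℕ∞ | ∃ m : ℕ, j = (m : ℕ∞) ∧ 1 ≤ m ∧
      delayedReturn T A abar i x < (m : ℕ∞) ∧ T^[abar m] x ∈ A}.Nonempty := by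
    by_contra hc
    rw [Set.not_nonempty_iff_eq_empty] at hc
    have : delayedReturn T A abar (i + 1) x = ⊤ := by
      show sInf _ = ⊤; rw [hc, sInf_empty]
    rw [this] at h
    exact absurd (le_antisymm le_top h) (by simp)
  have := enat_sInf_mem hne
  obtain ⟨m, hm, h1, h2, h3⟩ := this
  exact ⟨m, hm, h1, h2, h3⟩

lemma delayedReturn_mono_set (hsub : A' ⊆ A) :
    ∀ i, delayedReturn T A abar i x ≤ delayedReturn T A' abar i x := by
  intro i
  induction i with
  | zero => exact le_rfl
  | succ i ih =>
      apply le_sInf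
      rintro j ⟨m, rfl, h1, h2, h3⟩
      exact delayedReturn_le h1 (lt_of_le_of_lt ih h2) (hsub h3)

lemma delayedReturn_eq_of_no_bad {N : ℕ} (hsub : A' ⊆ A)
    (hx : ∀ m : ℕ, 1 ≤ m → m ≤ N → T^[abar m] x ∈ A → T^[abar m] x ∈ A') :
    ∀ i, delayedReturn T A abar i x ≤ (N : ℕ∞) →
      delayedReturn T A' abar i x = delayedReturn T A abar i x := by
  intro i
  induction i with
  | zero => intro _; rfl
  | succ i ih =>
      intro h
      obtain ⟨m, hm, h1, h2, h3⟩ := delayedReturn_spec h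
      have hmN : (m : ℕ∞) ≤ (N : ℕ∞) := hm ▸ h
      have hmN' : m ≤ N := by exact_mod_cast hmN
      have hprev : delayedReturn T A abar i x ≤ (N : ℕ∞) := le_of_lt (lt_of_lt_of_le h2 hmN)
      have hih := ih hprev
      have hmem' : T^[abar m] x ∈ A' := hx m h1 hmN' h3
      have hle : delayedReturn T A' abar (i + 1) x ≤ (m : ℕ∞) :=
        delayedReturn_le h1 (by rw [hih]; exact h2) hmem'
      have hmono := delayedReturn_mono_set (T := T) (abar := abar) (x := x) hsub (i + 1)
      rw [hm] at hmono
      rw [hm]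
      exact le_antisymm hle hmono

end DelayedReturn

section Meas

variable {X : Type*} [MeasurableSpace X] {T : X → X} {A : Set X} {abar : ℕ → ℕ}

omit [MeasurableSpace X] in
lemma delayedReturn_le_coe_iff {i N : ℕ} {x : X} :
    delayedReturn T A abar (i + 1) x ≤ (N : ℕ∞) ↔
      ∃ m : ℕ, 1 ≤ m ∧ m ≤ N ∧ delayedReturn T A abar i x < (m : ℕ∞) ∧ T^[abar m] x ∈ A := by
  constructor
  · intro h
    obtain ⟨m, hm, h1, h2, h3⟩ := delayedReturn_spec h
    refine ⟨m, h1, ?_, h2, h3⟩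
    exact_mod_cast hm ▸ h
  · rintro ⟨m, h1, h2, h3, h4⟩
    exact le_trans (delayedReturn_le h1 h3 h4) (by exact_mod_cast h2)

lemma delayedReturn_measurable (hTm : Measurable T) (hA : MeasurableSet A) (i : ℕ) :
    Measurable (delayedReturn T A abar i) := by
  induction i with
  | zero => exact measurable_const
  | succ i ih =>
      have hL : ∀ N : ℕ, MeasurableSet {x | delayedReturn T A abar (i + 1) x ≤ (N : ℕ∞)} := by
        intro N
        have : {x | delayedReturn T A abar (i + 1) x ≤ (N : ℕ∞)} =
            ⋃ m : ℕ, ⋃ (_ : 1 ≤ m ∧ m ≤ N),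
              ({x | delayedReturn T A abar i x < (m : ℕ∞)} ∩ T^[abar m] ⁻¹' A) := by
          ext x
          rw [Set.mem_setOf_eq, delayedReturn_le_coe_iff]
          simp only [Set.mem_iUnion, Set.mem_inter_iff, Set.mem_preimage, Set.mem_setOf_eq]
          constructor
          · rintro ⟨m, h1, h2, h3, h4⟩; exact ⟨m, ⟨h1, h2⟩, h3, h4⟩
          · rintro ⟨m, ⟨h1, h2⟩, h3, h4⟩; exact ⟨m, h1, h2, h3, h4⟩
        rw [this]
        refine MeasurableSet.iUnion fun m => MeasurableSet.iUnion fun _ =>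
          MeasurableSet.inter ?_ ((hTm.iterate (abar m)) hA)
        exact ih (MeasurableSet.of_discrete (s := {v : ℕ∞ | v < (m : ℕ∞)}))
      apply measurable_to_countable'
      intro v
      induction v using ENat.recTopCoe with
      | top =>
          have : delayedReturn T A abar (i + 1) ⁻¹' {⊤} =
              ⋂ N : ℕ, {x | delayedReturn T A abar (i + 1) x ≤ (N : ℕ∞)}ᶜ := by
            ext x
            simp only [Set.mem_preimage, Set.mem_singleton_iff, Set.mem_iInter, Set.mem_compl_iff,
              Set.mem_setOf_eq]
            constructor
            · intro h N hle
              rw [h] at hle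
              exact absurd (le_antisymm le_top hle) (by simp)
            · intro h
              by_contra hne
              obtain ⟨k, hk⟩ := WithTop.ne_top_iff_exists.1 hne
              exact h k (le_of_eq hk.symm)
          rw [this]
          exact MeasurableSet.iInter fun N => (hL N).compl
      | coe k =>
          cases k with
          | zero =>
              have : delayedReturn T A abar (i + 1) ⁻¹' {((0 : ℕ) : ℕ∞)} =
                  {x | delayedReturn T A abar (i + 1) x ≤ ((0 : ℕ) : ℕ∞)} := by
                ext x
                simp [le_zero_iff]
              rw [this]; exact hL 0
          | succ k =>
              have : delayedReturn T A abar (i + 1) ⁻¹' {((k + 1 : ℕ) : ℕ∞)} =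
                  {x | delayedReturn T A abar (i + 1) x ≤ ((k + 1 : ℕ) : ℕ∞)} \
                    {x | delayedReturn T A abar (i + 1) x ≤ ((k : ℕ) : ℕ∞)} := by
                ext x
                simp only [Set.mem_preimage, Set.mem_singleton_iff, Set.mem_diff,
                  Set.mem_setOf_eq]
                constructor
                · intro h
                  refine ⟨le_of_eq h, ?_⟩
                  rw [h]
                  intro hc
                  exact absurd (by exact_mod_cast hc) (by omega)
                · rintro ⟨h1, h2⟩
                  generalize hr : delayedReturn T A abar (i + 1) x = r at h1 h2 ⊢
                  have hne : r ≠ ⊤ := by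
                    intro hc; rw [hc] at h1
                    exact absurd (le_antisymm le_top h1)
                      (by exact_mod_cast ENat.coe_ne_top (k + 1))
                  lift r to ℕ using hne with j
                  have hj1 : j ≤ k + 1 := by exact_mod_cast h1
                  have hj2 : ¬ j ≤ k := fun hc => h2 (by exact_mod_cast hc)
                  have : j = k + 1 := by omega
                  exact_mod_cast this
              rw [this]; exact (hL (k + 1)).diff (hL k)

lemma delayedProc_measurable (hTm : Measurable T) (hA : MeasurableSet A) (c : ℝ≥0∞) :
    Measurable (delayedProc T A abar c) := by
  apply measurable_pi_lambda
  intro i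
  exact Measurable.const_mul
    ((Measurable.of_discrete (f := toE)).comp (delayedReturn_measurable hTm hA (i + 1))) c

end Meas

lemma toE_coe (m : ℕ) : toE (m : ℕ∞) = (m : ℝ≥0∞) := by
  show WithTop.map (Nat.cast : ℕ → NNReal) (WithTop.some m) = _
  exact ENNReal.coe_natCast m

lemma toE_mono : Monotone toE := by
  intro u v huv
  induction v using ENat.recTopCoe with
  | top => exact le_top
  | coe k =>
      induction u using ENat.recTopCoe with
      | top => exact absurd (le_antisymm le_top huv) (by exact_mod_cast ENat.coe_ne_top k)
      | coe j =>
          rw [toE_coe, toE_coe]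
          have : j ≤ k := by exact_mod_cast huv
          exact_mod_cast this

/-- The compactification function `[0,∞] → [0,1]`. -/
noncomputable def hfun (s : ℝ≥0∞) : ℝ := ((1 + s)⁻¹).toReal

lemma hfun_nonneg (s : ℝ≥0∞) : 0 ≤ hfun s := ENNReal.toReal_nonneg

lemma hfun_antitone : Antitone hfun := by
  intro a b hab
  have h1 : (1 + b)⁻¹ ≤ (1 + a)⁻¹ := ENNReal.inv_le_inv.2 (by gcongr)
  have h2 : (1 + a)⁻¹ ≠ ⊤ := by
    simp [ENNReal.inv_ne_top]
  exact ENNReal.toReal_mono h2 h1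

lemma hfun_continuous : Continuous hfun := by
  have h1 : Continuous fun s : ℝ≥0∞ => (1 + s)⁻¹ :=
    continuous_inv.comp (continuous_add_left 1)
  apply ENNReal.continuousOn_toReal.comp_continuous h1
  intro s
  simp [ENNReal.inv_ne_top]

lemma hfun_injective : Function.Injective hfun := by
  intro a b hab
  have hne : ∀ s : ℝ≥0∞, (1 + s)⁻¹ ≠ ⊤ := fun s => by simp [ENNReal.inv_ne_top]
  have : (1 + a)⁻¹ = (1 + b)⁻¹ :=
    (ENNReal.toReal_eq_toReal_iff' (hne a) (hne b)).1 hab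
  have h2 := inv_injective this
  have h1 : (1 : ℝ≥0∞) ≠ ⊤ := by simp
  exact WithTop.add_left_cancel h1 h2

lemma hfun_coe (s : ℝ≥0∞) (hs : s ≠ ⊤) : hfun s = (1 + s.toReal)⁻¹ := by
  rw [hfun, ENNReal.toReal_inv, ENNReal.toReal_add (by simp) hs, ENNReal.toReal_one]

/-- 1-Lipschitz bound for `hfun` on finite values. -/
lemma hfun_lip {a b : ℝ≥0∞} (hba : b ≤ a) (ha : a ≠ ⊤) :
    |hfun a - hfun b| ≤ (a - b).toReal := by
  have hb : b ≠ ⊤ := ne_top_of_le_ne_top ha hba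
  rw [hfun_coe a ha, hfun_coe b hb, ENNReal.toReal_sub_of_le hba ha]
  have h0a : (0:ℝ) ≤ a.toReal := ENNReal.toReal_nonneg
  have h0b : (0:ℝ) ≤ b.toReal := ENNReal.toReal_nonneg
  have hba' : b.toReal ≤ a.toReal := ENNReal.toReal_mono ha hba
  set a' := a.toReal; set b' := b.toReal
  have hpa : (0:ℝ) < 1 + a' := by linarith
  have hpb : (0:ℝ) < 1 + b' := by linarith
  have huv : (1 + a')⁻¹ ≤ (1 + b')⁻¹ := by
    apply inv_anti₀ hpb
    linarith
  rw [abs_of_nonpos (by linarith)]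
  have key : -((1 + a')⁻¹ - (1 + b')⁻¹) = ((1 + a')⁻¹ * (1 + b')⁻¹) * (a' - b') := by
    field_simp
    ring
  rw [key]
  have hu1 : (1 + a')⁻¹ ≤ 1 := inv_le_one_of_one_le₀ (by linarith)
  have hv1 : (1 + b')⁻¹ ≤ 1 := inv_le_one_of_one_le₀ (by linarith)
  have hu0 : 0 ≤ (1 + a')⁻¹ := by positivity
  have hv0 : 0 ≤ (1 + b')⁻¹ := by positivity
  calc ((1 + a')⁻¹ * (1 + b')⁻¹) * (a' - b') ≤ 1 * (a' - b') := by
        apply mul_le_mul_of_nonneg_right _ (by linarith)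
        calc (1 + a')⁻¹ * (1 + b')⁻¹ ≤ 1 * 1 := by
              apply mul_le_mul hu1 hv1 hv0 (by norm_num)
          _ = 1 := by ring
    _ = a' - b' := by ring

lemma hfun_small {η : ℝ} (hη : 0 < η) {s : ℝ≥0∞} (hs : ENNReal.ofReal (1/η) ≤ s) :
    hfun s ≤ η := by
  have h1 : ENNReal.ofReal (1/η) ≤ 1 + s := le_trans hs le_add_self
  have h2 : (1 + s)⁻¹ ≤ (ENNReal.ofReal (1/η))⁻¹ := ENNReal.inv_le_inv.2 h1
  have h3 : (ENNReal.ofReal (1/η))⁻¹ = ENNReal.ofReal η := by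
    rw [one_div, ENNReal.ofReal_inv_of_pos hη, inv_inv]
  rw [h3] at h2
  calc hfun s ≤ (ENNReal.ofReal η).toReal :=
        ENNReal.toReal_mono (by simp) h2
    _ = η := ENNReal.toReal_ofReal hη.le

lemma uc_lemma (g : BoundedContinuousFunction (ℕ → ℝ≥0∞) ℝ) {ε : ℝ} (hε : 0 < ε) :
    ∃ η : ℝ, 0 < η ∧ ∀ ω ω' : ℕ → ℝ≥0∞,
      (∀ i, |hfun (ω i) - hfun (ω' i)| ≤ η) → |g ω - g ω'| ≤ ε := by
  by_contra hcon
  push_neg at hcon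
  have h' : ∀ n : ℕ, ∃ ω ω' : ℕ → ℝ≥0∞,
      (∀ i, |hfun (ω i) - hfun (ω' i)| ≤ 1 / (n + 1)) ∧ ε < |g ω - g ω'| := by
    intro n
    obtain ⟨ω, ω', h1, h2⟩ := hcon (1 / (n + 1)) (by positivity)
    exact ⟨ω, ω', h1, h2⟩
  choose F F' hFF hgap using h'
  set z : ℕ → (ℕ → ℝ≥0∞) × (ℕ → ℝ≥0∞) := fun n => (F n, F' n) with hz
  obtain ⟨p, -, φ, hφ, hconv⟩ := isCompact_univ.tendsto_subseq (fun n => Set.mem_univ (z n))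
  have h1 : Tendsto (fun n => F (φ n)) atTop (𝓝 p.1) :=
    (continuous_fst.tendsto p).comp hconv
  have h2 : Tendsto (fun n => F' (φ n)) atTop (𝓝 p.2) :=
    (continuous_snd.tendsto p).comp hconv
  have hrate : Tendsto (fun n : ℕ => 1 / ((φ n : ℝ) + 1)) atTop (𝓝 0) :=
    tendsto_one_div_add_atTop_nhds_zero_nat.comp hφ.tendsto_atTop
  have hpeq : p.1 = p.2 := by
    funext i
    have c1 : Tendsto (fun n => hfun (F (φ n) i)) atTop (𝓝 (hfun (p.1 i))) :=
      (hfun_continuous.tendsto _).comp (((continuous_apply i).tendsto p.1).comp h1)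
    have c2 : Tendsto (fun n => hfun (F' (φ n) i)) atTop (𝓝 (hfun (p.2 i))) :=
      (hfun_continuous.tendsto _).comp (((continuous_apply i).tendsto p.2).comp h2)
    have cd : Tendsto (fun n => hfun (F (φ n) i) - hfun (F' (φ n) i)) atTop (𝓝 0) :=
      squeeze_zero_norm (fun n => hFF (φ n) i) hrate
    have := tendsto_nhds_unique (c1.sub c2) cd
    exact hfun_injective (by linarith)
  have hgl : Tendsto (fun n => |g (F (φ n)) - g (F' (φ n))|) atTop (𝓝 0) := by
    have := ((g.continuous.tendsto p.1).comp h1).sub ((g.continuous.tendsto p.2).comp h2)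
    rw [hpeq, sub_self] at this
    simpa using this.abs
  have : ε ≤ 0 := ge_of_tendsto' hgl fun n => (hgap (φ n)).le
  linarith

/-- robustness of delayed Poisson limits under inner approximation of the
rare events.  Convergence in distribution in `[0,∞]^ℕ` is expressed via bounded continuous
test functions; `Φ` is the law of the limiting process, supported on `[0,∞)^ℕ`. -/
theorem stmt_15 {X : Type*} [MeasurableSpace X] (μ : Measure X) [IsProbabilityMeasure μ]
    (T : X → X) (hT : MeasurePreserving T μ μ)
    (α abar : ℕ → ℕ) (habar : ∀ j, abar j = ∑ i ∈ Finset.Icc 1 j, α i)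
    (A : ℕ → Set X) (hAmeas : ∀ l, MeasurableSet (A l))
    (hApos : ∀ l, 0 < μ (A l)) (hrare : Tendsto (fun l => μ (A l)) atTop (𝓝 0))
    (Φ : Measure (ℕ → ℝ≥0∞)) [IsProbabilityMeasure Φ]
    (hΦfin : Φ {ω | ∃ i, ω i = ⊤} = 0)
    (happrox : ∀ δ : ℝ, 0 < δ → ∃ A' : ℕ → Set X,
      (∀ l, MeasurableSet (A' l)) ∧ (∀ l, A' l ⊆ A l) ∧ (∀ l, 0 < μ (A' l)) ∧
      (∀ l, μ (A l \ A' l) < ENNReal.ofReal δ * μ (A l)) ∧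
      ∀ g : BoundedContinuousFunction (ℕ → ℝ≥0∞) ℝ,
        Tendsto (fun l => ∫ x, g (delayedProc T (A' l) abar (μ (A' l)) x) ∂μ) atTop
          (𝓝 (∫ ω, g ω ∂Φ))) :
    ∀ g : BoundedContinuousFunction (ℕ → ℝ≥0∞) ℝ,
      Tendsto (fun l => ∫ x, g (delayedProc T (A l) abar (μ (A l)) x) ∂μ) atTop
        (𝓝 (∫ ω, g ω ∂Φ)) := by
  intro g
  rw [Metric.tendsto_atTop]
  intro ε hε
  have hg0 : (0:ℝ) ≤ ‖g‖ := norm_nonneg g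
  set L := ∫ ω, g ω ∂Φ with hL
  set ε₁ := ε / 4 with hε₁def
  have hε₁ : 0 < ε₁ := by positivity
  obtain ⟨η, hη, hUC⟩ := uc_lemma g hε₁
  set Khalf : ℝ≥0∞ := ENNReal.ofReal (1 / η) with hKhalfdef
  set K : ℝ≥0∞ := 2 * Khalf with hKdef
  have hKhne : Khalf ≠ ⊤ := ENNReal.ofReal_ne_top
  have hKne : K ≠ ⊤ := by
    rw [hKdef]
    exact ENNReal.mul_ne_top (by simp) hKhne
  have hK1ne : K + 1 ≠ ⊤ := by
    exact ENNReal.add_ne_top.2 ⟨hKne, by simp⟩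
  have hK2 : K / 2 = Khalf := by
    rw [hKdef, mul_comm, div_eq_mul_inv, mul_assoc,
      ENNReal.mul_inv_cancel (by norm_num) (by norm_num), mul_one]
  set KR : ℝ := (K + 1).toReal with hKRdef
  have hKR0 : 0 ≤ KR := ENNReal.toReal_nonneg
  set δ : ℝ := min (1/2) (min (η / (KR + 1)) (ε₁ / ((2 * ‖g‖ + 1) * (KR + 1)))) with hδdef
  have hδ0 : 0 < δ := lt_min (by norm_num) (lt_min (by positivity) (by positivity))
  have hδhalf : δ ≤ 1/2 := min_le_left _ _
  have hδη : δ * KR ≤ η := by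
    have h1 : δ ≤ η / (KR + 1) := le_trans (min_le_right _ _) (min_le_left _ _)
    calc δ * KR ≤ (η / (KR + 1)) * KR := mul_le_mul_of_nonneg_right h1 hKR0
      _ ≤ η := by
          rw [div_mul_eq_mul_div, div_le_iff₀ (by positivity)]
          nlinarith
  have hδε : 2 * ‖g‖ * (δ * KR) ≤ ε₁ := by
    have h2 : δ ≤ ε₁ / ((2 * ‖g‖ + 1) * (KR + 1)) :=
      le_trans (min_le_right _ _) (min_le_right _ _)
    calc 2 * ‖g‖ * (δ * KR) ≤ ((2 * ‖g‖ + 1) * (KR + 1)) * δ := by nlinarith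
      _ ≤ ((2 * ‖g‖ + 1) * (KR + 1)) * (ε₁ / ((2 * ‖g‖ + 1) * (KR + 1))) :=
          mul_le_mul_of_nonneg_left h2 (by positivity)
      _ = ε₁ := by field_simp
  obtain ⟨A', hA'm, hA'sub, hA'pos, hA'diff, hA'conv⟩ := happrox δ hδ0
  obtain ⟨N₀, hN₀⟩ := Metric.tendsto_atTop.1 (hA'conv g) ε₁ hε₁
  refine ⟨N₀, fun l hl => ?_⟩
  -- notation
  set c : ℝ≥0∞ := μ (A l) with hcdef
  set c' : ℝ≥0∞ := μ (A' l) with hc'def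
  have hc0 : c ≠ 0 := (hApos l).ne'
  have hctop : c ≠ ⊤ := measure_ne_top μ _
  have hc'le : c' ≤ c := measure_mono (hA'sub l)
  have hdiff : μ (A l \ A' l) ≤ ENNReal.ofReal δ * c := (hA'diff l).le
  have hsplit : c ≤ c' + ENNReal.ofReal δ * c := by
    have h1 : μ (A l) ≤ μ (A' l) + μ (A l \ A' l) := by
      calc μ (A l) = μ (A' l ∪ (A l \ A' l)) := by rw [Set.union_diff_cancel (hA'sub l)]
        _ ≤ μ (A' l) + μ (A l \ A' l) := measure_union_le _ _
    exact le_trans h1 (add_le_add_right hdiff _)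
  have hchalf : c / 2 ≤ c' := by
    by_contra hlt
    push_neg at hlt
    have hhalf : ENNReal.ofReal δ * c ≤ c / 2 := by
      have e1 : ENNReal.ofReal δ ≤ ENNReal.ofReal (1/2) := ENNReal.ofReal_le_ofReal hδhalf
      have e2 : ENNReal.ofReal (1/2 : ℝ) = (2 : ℝ≥0∞)⁻¹ := by
        rw [one_div, ENNReal.ofReal_inv_of_pos (by norm_num)]
        norm_num
      calc ENNReal.ofReal δ * c ≤ (2 : ℝ≥0∞)⁻¹ * c := by
            rw [← e2]; exact mul_le_mul_left e1 c
        _ = c / 2 := by rw [ENNReal.div_eq_inv_mul]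
    have : c < c := by
      calc c ≤ c' + ENNReal.ofReal δ * c := hsplit
        _ ≤ c' + c / 2 := add_le_add_right hhalf _
        _ < c / 2 + c / 2 := ENNReal.add_lt_add_right
            (by simp [ENNReal.div_eq_inv_mul, ENNReal.mul_ne_top, hctop]) hlt
        _ = c := ENNReal.add_halves c
    exact lt_irrefl _ this
  have hKcne : K / c ≠ ⊤ := by
    simp only [ENNReal.div_eq_inv_mul]
    exact ENNReal.mul_ne_top (by simp [ENNReal.inv_ne_top, hc0]) hKne
  set N : ℕ := ⌈(K / c).toReal⌉₊ with hNdef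
  have hN_ge : K / c ≤ (N : ℝ≥0∞) := by
    conv_lhs => rw [← ENNReal.ofReal_toReal hKcne]
    calc ENNReal.ofReal ((K / c).toReal) ≤ ENNReal.ofReal (N : ℝ) :=
          ENNReal.ofReal_le_ofReal (Nat.le_ceil _)
      _ = (N : ℝ≥0∞) := ENNReal.ofReal_natCast N
  have hN_le : (N : ℝ≥0∞) ≤ K / c + 1 := by
    have h2 : (N : ℝ) ≤ (K / c).toReal + 1 := (Nat.ceil_lt_add_one ENNReal.toReal_nonneg).le
    calc (N : ℝ≥0∞) = ENNReal.ofReal (N : ℝ) := (ENNReal.ofReal_natCast N).symm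
      _ ≤ ENNReal.ofReal ((K / c).toReal + 1) := ENNReal.ofReal_le_ofReal h2
      _ ≤ ENNReal.ofReal ((K / c).toReal) + ENNReal.ofReal 1 := ENNReal.ofReal_add_le
      _ = K / c + 1 := by rw [ENNReal.ofReal_toReal hKcne, ENNReal.ofReal_one]
  have hcN_ge : K ≤ c * N := by
    calc K = c * (K / c) := (ENNReal.mul_div_cancel hc0 hctop).symm
      _ ≤ c * N := mul_le_mul_right hN_ge c
  have hcN_le : c * N ≤ K + 1 := by
    calc c * N ≤ c * (K / c + 1) := mul_le_mul_right hN_le c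
      _ = c * (K / c) + c := by rw [mul_add, mul_one]
      _ = K + c := by rw [ENNReal.mul_div_cancel hc0 hctop]
      _ ≤ K + 1 := add_le_add_right prob_le_one _
  -- the bad set
  set B : Set X := ⋃ m ∈ Finset.Icc 1 N, (T^[abar m]) ⁻¹' (A l \ A' l) with hBdef
  have hBmeas : MeasurableSet B := by
    apply MeasurableSet.iUnion
    intro m
    apply MeasurableSet.iUnion
    intro _
    exact (hT.iterate (abar m)).measurable ((hAmeas l).diff (hA'm l))
  have hBbound : μ B ≤ ENNReal.ofReal δ * (K + 1) := by
    calc μ B ≤ ∑ m ∈ Finset.Icc 1 N, μ ((T^[abar m]) ⁻¹' (A l \ A' l)) :=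
          measure_biUnion_finset_le _ _
      _ = ∑ m ∈ Finset.Icc 1 N, μ (A l \ A' l) :=
          Finset.sum_congr rfl fun m _ =>
            (hT.iterate (abar m)).measure_preimage
              ((hAmeas l).diff (hA'm l)).nullMeasurableSet
      _ ≤ ∑ _m ∈ Finset.Icc 1 N, ENNReal.ofReal δ * c := Finset.sum_le_sum fun m _ => hdiff
      _ = (N : ℝ≥0∞) * (ENNReal.ofReal δ * c) := by
          rw [Finset.sum_const, Nat.card_Icc, Nat.add_sub_cancel, nsmul_eq_mul]
      _ = ENNReal.ofReal δ * (c * N) := by ring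
      _ ≤ ENNReal.ofReal δ * (K + 1) := mul_le_mul_right hcN_le _
  have hμBreal : (μ B).toReal ≤ δ * KR := by
    calc (μ B).toReal ≤ (ENNReal.ofReal δ * (K + 1)).toReal :=
          ENNReal.toReal_mono (ENNReal.mul_ne_top ENNReal.ofReal_ne_top hK1ne) hBbound
      _ = δ * KR := by rw [ENNReal.toReal_mul, ENNReal.toReal_ofReal hδ0.le]
  -- good points behave well
  have hgoodx : ∀ x, x ∉ B → ∀ m : ℕ, 1 ≤ m → m ≤ N → T^[abar m] x ∈ A l →
      T^[abar m] x ∈ A' l := by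
    intro x hx m h1 h2 h3
    by_contra hmem
    exact hx (Set.mem_biUnion (Finset.mem_Icc.2 ⟨h1, h2⟩) ⟨h3, hmem⟩)
  have hclose : ∀ x, x ∉ B → ∀ i,
      |hfun (delayedProc T (A l) abar c x i) - hfun (delayedProc T (A' l) abar c' x i)| ≤ η := by
    intro x hx i
    have e1 : delayedProc T (A l) abar c x i
        = c * toE (delayedReturn T (A l) abar (i + 1) x) := rfl
    have e2 : delayedProc T (A' l) abar c' x i
        = c' * toE (delayedReturn T (A' l) abar (i + 1) x) := rfl
    by_cases hrN : delayedReturn T (A l) abar (i + 1) x ≤ (N : ℕ∞)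
    · have heq := delayedReturn_eq_of_no_bad (hA'sub l) (hgoodx x hx) (i + 1) hrN
      obtain ⟨m, hm, -, -, -⟩ := delayedReturn_spec hrN
      have hmN : m ≤ N := by
        have := hrN
        rw [hm] at this
        exact_mod_cast this
      rw [e1, e2, heq, hm, toE_coe]
      have hba : c' * (m : ℝ≥0∞) ≤ c * m := mul_le_mul_left hc'le _
      have hcm_le : c * (m : ℝ≥0∞) ≤ K + 1 := by
        calc c * (m : ℝ≥0∞) ≤ c * N := mul_le_mul_right (by exact_mod_cast hmN) c
          _ ≤ K + 1 := hcN_le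
      have hane : c * (m : ℝ≥0∞) ≠ ⊤ := ne_top_of_le_ne_top hK1ne hcm_le
      calc |hfun (c * (m : ℝ≥0∞)) - hfun (c' * m)| ≤ (c * (m : ℝ≥0∞) - c' * m).toReal :=
            hfun_lip hba hane
        _ ≤ (ENNReal.ofReal δ * (K + 1)).toReal := by
            apply ENNReal.toReal_mono (ENNReal.mul_ne_top ENNReal.ofReal_ne_top hK1ne)
            rw [tsub_le_iff_right]
            calc c * (m : ℝ≥0∞) ≤ (c' + ENNReal.ofReal δ * c) * m := mul_le_mul_left hsplit _
              _ = c' * m + ENNReal.ofReal δ * (c * m) := by ring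
              _ ≤ c' * m + ENNReal.ofReal δ * (K + 1) := by
                  exact add_le_add_right (mul_le_mul_right hcm_le _) _
              _ = ENNReal.ofReal δ * (K + 1) + c' * m := add_comm _ _
        _ = δ * KR := by rw [ENNReal.toReal_mul, ENNReal.toReal_ofReal hδ0.le, hKRdef]
        _ ≤ η := hδη
    · push_neg at hrN
      have hr' : (N : ℕ∞) < delayedReturn T (A' l) abar (i + 1) x :=
        lt_of_lt_of_le hrN (delayedReturn_mono_set (hA'sub l) (i + 1))
      have hb1 : Khalf ≤ c * toE (delayedReturn T (A l) abar (i + 1) x) := by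
        calc Khalf ≤ K := by
              rw [hKdef]
              exact le_mul_of_one_le_left' one_le_two
          _ ≤ c * N := hcN_ge
          _ ≤ c * toE (delayedReturn T (A l) abar (i + 1) x) := by
              apply mul_le_mul_right
              rw [← toE_coe]
              exact toE_mono hrN.le
      have hb2 : Khalf ≤ c' * toE (delayedReturn T (A' l) abar (i + 1) x) := by
        calc Khalf = K / 2 := hK2.symm
          _ ≤ (c * N) / 2 := ENNReal.div_le_div_right hcN_ge 2
          _ = (c / 2) * N := by rw [div_eq_mul_inv, div_eq_mul_inv]; ring
          _ ≤ c' * N := mul_le_mul_left hchalf _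
          _ ≤ c' * toE (delayedReturn T (A' l) abar (i + 1) x) := by
              apply mul_le_mul_right
              rw [← toE_coe]
              exact toE_mono hr'.le
      rw [e1, e2]
      have s1 : hfun (c * toE (delayedReturn T (A l) abar (i + 1) x)) ≤ η :=
        hfun_small hη (by rw [← hKhalfdef]; exact hb1)
      have s2 : hfun (c' * toE (delayedReturn T (A' l) abar (i + 1) x)) ≤ η :=
        hfun_small hη (by rw [← hKhalfdef]; exact hb2)
      have n1 := hfun_nonneg (c * toE (delayedReturn T (A l) abar (i + 1) x))
      have n2 := hfun_nonneg (c' * toE (delayedReturn T (A' l) abar (i + 1) x))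
      rw [abs_sub_le_iff]
      constructor <;> linarith
  -- integral comparison
  set G : X → ℝ := fun x => g (delayedProc T (A l) abar c x) with hGdef
  set G' : X → ℝ := fun x => g (delayedProc T (A' l) abar c' x) with hG'def
  have hmeasG : Measurable G :=
    g.continuous.measurable.comp (delayedProc_measurable hT.measurable (hAmeas l) c)
  have hmeasG' : Measurable G' :=
    g.continuous.measurable.comp (delayedProc_measurable hT.measurable (hA'm l) c')
  have hIntG : Integrable G μ := by
    apply Integrable.mono' (integrable_const ‖g‖) hmeasG.aestronglyMeasurable
    filter_upwards with x
    exact g.norm_coe_le_norm _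
  have hIntG' : Integrable G' μ := by
    apply Integrable.mono' (integrable_const ‖g‖) hmeasG'.aestronglyMeasurable
    filter_upwards with x
    exact g.norm_coe_le_norm _
  have hIndInt : Integrable (B.indicator (fun _ => 2 * ‖g‖)) μ :=
    (integrable_const (2 * ‖g‖)).indicator hBmeas
  have hptwise : ∀ x, |G x - G' x| ≤ B.indicator (fun _ => 2 * ‖g‖) x + ε₁ := by
    intro x
    by_cases hx : x ∈ B
    · rw [Set.indicator_of_mem hx]
      have b1 : |G x| ≤ ‖g‖ := g.norm_coe_le_norm _
      have b2 : |G' x| ≤ ‖g‖ := g.norm_coe_le_norm _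
      have := abs_sub (G x) (G' x)
      linarith
    · rw [Set.indicator_of_notMem hx]
      linarith [hUC (delayedProc T (A l) abar c x) (delayedProc T (A' l) abar c' x)
        (hclose x hx)]
  have hkey : |∫ x, G x ∂μ - ∫ x, G' x ∂μ| ≤ 2 * ‖g‖ * (μ B).toReal + ε₁ := by
    rw [← integral_sub hIntG hIntG']
    calc |∫ x, (G x - G' x) ∂μ| ≤ ∫ x, |G x - G' x| ∂μ := by
          rw [← Real.norm_eq_abs]
          refine le_trans (norm_integral_le_integral_norm _) ?_
          simp [Real.norm_eq_abs]
      _ ≤ ∫ x, (B.indicator (fun _ => 2 * ‖g‖) x + ε₁) ∂μ :=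
          integral_mono (hIntG.sub hIntG').abs (hIndInt.add (integrable_const ε₁)) hptwise
      _ = 2 * ‖g‖ * (μ B).toReal + ε₁ := by
          rw [integral_add hIndInt (integrable_const ε₁), integral_indicator_const _ hBmeas,
            integral_const, probReal_univ, one_smul, smul_eq_mul, measureReal_def,
            mul_comm ((μ B).toReal)]
  have hεB : 2 * ‖g‖ * (μ B).toReal ≤ ε₁ :=
    le_trans (mul_le_mul_of_nonneg_left hμBreal (by positivity)) hδε
  have htail : dist (∫ x, G' x ∂μ) L < ε₁ := hN₀ l hl
  have h1 : dist (∫ x, G x ∂μ) (∫ x, G' x ∂μ) ≤ 2 * ε₁ := by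
    rw [Real.dist_eq]
    linarith [hkey]
  calc dist (∫ x, G x ∂μ) L ≤ dist (∫ x, G x ∂μ) (∫ x, G' x ∂μ) + dist (∫ x, G' x ∂μ) L :=
        dist_triangle _ _ _
    _ < 2 * ε₁ + ε₁ := by linarith
    _ < ε := by rw [hε₁def]; linarith
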